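/- Let $G$ be an H-type group and for $\mu \in \mathfrak{z}^* \setminus \{0\}$ let $R_\mu$ be the orthogonal transformation with $J_\mu = |\mu| R_\mu J R_\mu^t$ where $J$ is the standard complex structure. Then the map $\alpha_\mu : G \to \mathbb{H}_n$, $\alpha_\mu(x,u) = (R_\mu^t x, \mu \cdot u / |\mu|)$, is a group homomorphism from $G$ to the Heisenberg group $\mathbb{H}_n$. -/

import Mathlib

open scoped RealInnerProductSpace

/-- Let `G = ℝ^{2n} × ℝ^m` be an H-type group with product
`(x,u)(x',u') = (x+x', u+u'+½ω(x,x'))`, where `⟪μ, ω(x,x')⟫ = ⟪J_μ x, x'⟫`, and let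
`ℍ_n = ℝ^{2n} × ℝ` be the Heisenberg group with product
`(z,t)(z',t') = (z+z', t+t'+½⟪J z, z'⟫)`, `J` the standard complex structure.  For
`μ ≠ 0` let `R_μ` be the orthogonal transformation with `J_μ = |μ| R_μ J R_μᵗ`.  Then
`α_μ(x,u) = (R_μᵗ x, μ·u/|μ|)` is a group homomorphism `G → ℍ_n`. -/
theorem alpha_mu_is_homomorphism (n m : ℕ) (μ : EuclideanSpace ℝ (Fin m)) (hμ : μ ≠ 0)
    (Jstd Jμ : EuclideanSpace ℝ (Fin (2 * n)) →ₗ[ℝ] EuclideanSpace ℝ (Fin (2 * n)))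
    (Rμ : EuclideanSpace ℝ (Fin (2 * n)) ≃ₗᵢ[ℝ] EuclideanSpace ℝ (Fin (2 * n)))
    (hJμ : ∀ x, Jμ x = ‖μ‖ • (Rμ (Jstd (Rμ.symm x))))
    (ω : EuclideanSpace ℝ (Fin (2 * n)) →ₗ[ℝ] EuclideanSpace ℝ (Fin (2 * n)) →ₗ[ℝ]
      EuclideanSpace ℝ (Fin m))
    (hω : ∀ x x', ⟪μ, ω x x'⟫ = ⟪Jμ x, x'⟫)
    (mulG : (EuclideanSpace ℝ (Fin (2 * n)) × EuclideanSpace ℝ (Fin m)) →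
      (EuclideanSpace ℝ (Fin (2 * n)) × EuclideanSpace ℝ (Fin m)) →
      (EuclideanSpace ℝ (Fin (2 * n)) × EuclideanSpace ℝ (Fin m)))
    (hmulG : ∀ p q, mulG p q = (p.1 + q.1, p.2 + q.2 + (1 / 2 : ℝ) • ω p.1 q.1))
    (mulH : (EuclideanSpace ℝ (Fin (2 * n)) × ℝ) → (EuclideanSpace ℝ (Fin (2 * n)) × ℝ) →
      (EuclideanSpace ℝ (Fin (2 * n)) × ℝ))
    (hmulH : ∀ p q, mulH p q = (p.1 + q.1, p.2 + q.2 + (1 / 2 : ℝ) * ⟪Jstd p.1, q.1⟫))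
    (α : (EuclideanSpace ℝ (Fin (2 * n)) × EuclideanSpace ℝ (Fin m)) →
      (EuclideanSpace ℝ (Fin (2 * n)) × ℝ))
    (hα : ∀ p, α p = (Rμ.symm p.1, ⟪μ, p.2⟫ / ‖μ‖)) :
    ∀ a b, α (mulG a b) = mulH (α a) (α b) := by
  intro a b
  have hμn : ‖μ‖ ≠ 0 := norm_ne_zero_iff.mpr hμ
  rw [hmulG, hα, hα, hα, hmulH]
  have key : ⟪μ, ω a.1 b.1⟫ = ‖μ‖ * ⟪Jstd (Rμ.symm a.1), Rμ.symm b.1⟫ := by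
    rw [hω, hJμ, real_inner_smul_left]
    congr 1
    have := Rμ.symm.inner_map_map (Rμ (Jstd (Rμ.symm a.1))) b.1
    simpa using this.symm
  refine Prod.ext (by simp) ?_
  simp only [inner_add_right, real_inner_smul_right, key]
  field_simp
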